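/- Let ι be a finite type and let N : ℝ → Matrix ι ι ℝ, λ : ℝ → (ι → ℝ) and θ, h, W : ℝ → (ι → ℝ). Assume that for every t ∈ ℝ (derivatives taken in the finite-dimensional space ι → ℝ): θ has derivative (N t)ᵀ.mulVec (θ t) − λ t at t, h has derivative (N t)ᵀ.mulVec (h t) + λ t at t, and W has derivative −(N t).mulVec (W t) at t. Then for every t ∈ ℝ, the dot product (θ t + h t) ⬝ᵥ (W t) equals (θ 0 + h 0) ⬝ᵥ (W 0). In particular, if h 0 = 0 then θ t ⬝ᵥ W t + h t ⬝ᵥ W t = θ 0 ⬝ᵥ W 0 for all t. -/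

import Mathlib

open Matrix

lemma hasDerivAt_comp_proj {ι : Type*} [Fintype ι] {g : ℝ → ι → ℝ} {d : ι → ℝ} {t : ℝ}
    (hg : HasDerivAt g d t) (i : ι) : HasDerivAt (fun s => g s i) (d i) t := by
  have := ((ContinuousLinearMap.proj i : (ι → ℝ) →L[ℝ] ℝ)).hasFDerivAt.comp_hasDerivAt t hg
  exact this

/-- The conservation law at the heart of Proposition 6.3 of the paper: along a
nonholonomic trajectory, the quantity `(θ + h) ⬝ᵥ W` is constant in time. -/
theorem conservation_law
    {ι : Type*} [Fintype ι]
    (N : ℝ → Matrix ι ι ℝ) (lam θ h W : ℝ → ι → ℝ)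
    (hθ : ∀ t : ℝ, HasDerivAt θ ((N t)ᵀ.mulVec (θ t) - lam t) t)
    (hh : ∀ t : ℝ, HasDerivAt h ((N t)ᵀ.mulVec (h t) + lam t) t)
    (hW : ∀ t : ℝ, HasDerivAt W (-(N t).mulVec (W t)) t) :
    (∀ t : ℝ, (θ t + h t) ⬝ᵥ W t = (θ 0 + h 0) ⬝ᵥ W 0) ∧
      (h 0 = 0 → ∀ t : ℝ, θ t ⬝ᵥ W t + h t ⬝ᵥ W t = θ 0 ⬝ᵥ W 0) := by
  have hg : ∀ t : ℝ, HasDerivAt (fun s => θ s + h s)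
      ((N t)ᵀ.mulVec (θ t + h t)) t := by
    intro t
    have := (hθ t).add (hh t)
    rw [Matrix.mulVec_add]
    have e : (N t)ᵀ *ᵥ θ t + (N t)ᵀ *ᵥ h t
        = (N t)ᵀ *ᵥ θ t - lam t + ((N t)ᵀ *ᵥ h t + lam t) := by abel
    rw [e]
    exact this
  have key : ∀ t : ℝ, HasDerivAt (fun s => (θ s + h s) ⬝ᵥ W s) 0 t := by
    intro t
    have hsum : HasDerivAt (fun s => ∑ i, (θ s + h s) i * W s i)
        (∑ i, (((N t)ᵀ.mulVec (θ t + h t)) i * W t i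
          + (θ t + h t) i * (-(N t).mulVec (W t)) i)) t := by
      apply HasDerivAt.fun_sum
      intro i _
      exact (hasDerivAt_comp_proj (hg t) i).mul (hasDerivAt_comp_proj (hW t) i)
    have heq : (∑ i, (((N t)ᵀ.mulVec (θ t + h t)) i * W t i
        + (θ t + h t) i * (-(N t).mulVec (W t)) i)) = 0 := by
      rw [Finset.sum_add_distrib]
      have h1 : (∑ i, ((N t)ᵀ.mulVec (θ t + h t)) i * W t i)
          = ((N t)ᵀ.mulVec (θ t + h t)) ⬝ᵥ W t := rfl
      have h2 : (∑ i, (θ t + h t) i * (-(N t).mulVec (W t)) i)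
          = (θ t + h t) ⬝ᵥ (-(N t).mulVec (W t)) := rfl
      rw [h1, h2, Matrix.mulVec_transpose, dotProduct_neg,
        Matrix.dotProduct_mulVec]
      ring
    rw [heq] at hsum
    exact hsum
  have hconst : ∀ t : ℝ, (θ t + h t) ⬝ᵥ W t = (θ 0 + h 0) ⬝ᵥ W 0 := by
    intro t
    exact is_const_of_deriv_eq_zero (fun x => (key x).differentiableAt)
      (fun x => (key x).deriv) t 0
  refine ⟨hconst, fun h0 t => ?_⟩
  have := hconst t
  rw [add_dotProduct] at this
  rw [this, h0]
  simp [add_dotProduct]
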